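/- For every n ≥ 0 and k ≥ 0, the map ψ sending a pair σ = (L,R) of disjoint k-element subsets L = {l_1 < ⋯ < l_k} and R = {r_1 < ⋯ < r_k} of [n] to the set of rows ψ(σ) = {(l_1,r_1), …, (l_k,r_k)} is a bijection from {(L,R) : L,R ⊆ [n], |L| = |R| = k, L ∩ R = ∅} onto the k-element subsets of V_{P_n} whose elements are pairwise adjacent. -/

import Mathlib

open Finset

/-- The vertex set `V_{P_n} = {(l,r) ∈ [n] × [n] : l ≠ r}`. -/
def VPn (n : ℕ) : Finset (ℕ × ℕ) :=
  ((Finset.Icc 1 n) ×ˢ (Finset.Icc 1 n)).filter fun p => p.1 ≠ p.2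

/-- `(l₁,r₁)` and `(l₂,r₂)` are adjacent: `l₁, l₂, r₁, r₂` are pairwise distinct
and `l₁ < l₂ ↔ r₁ < r₂`. -/
def AdjP (p q : ℕ × ℕ) : Prop :=
  p.1 ≠ q.1 ∧ p.1 ≠ q.2 ∧ p.2 ≠ q.1 ∧ p.2 ≠ q.2 ∧ (p.1 < q.1 ↔ p.2 < q.2)

/-- The map `ψ` sending a pair `σ = (L,R)` of disjoint sets
`L = {l₁ < ⋯ < l_k}`, `R = {r₁ < ⋯ < r_k}` to its set of rows
`{(l₁,r₁), …, (l_k,r_k)}`. -/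
def psi (LR : Finset ℕ × Finset ℕ) : Finset (ℕ × ℕ) :=
  ((LR.1.sort (· ≤ ·)).zip (LR.2.sort (· ≤ ·))).toFinset

lemma zip_nodup (L R : Finset ℕ) (h : L.card = R.card) :
    ((L.sort (· ≤ ·)).zip (R.sort (· ≤ ·))).Nodup := by
  apply List.Nodup.of_map Prod.fst
  rw [List.map_fst_zip (by simp [h])]
  exact Finset.sort_nodup _ _

lemma psi_card (L R : Finset ℕ) (h : L.card = R.card) : (psi (L, R)).card = L.card := by
  rw [psi, List.toFinset_card_of_nodup (zip_nodup L R h)]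
  simp [List.length_zip, h]

lemma toFinset_map_image (l : List (ℕ × ℕ)) (f : ℕ × ℕ → ℕ) :
    l.toFinset.image f = (l.map f).toFinset := by
  ext x; simp

lemma image_fst_psi (L R : Finset ℕ) (h : L.card = R.card) :
    (psi (L, R)).image Prod.fst = L := by
  rw [psi, toFinset_map_image, List.map_fst_zip (by simp [h]), Finset.sort_toFinset]

lemma image_snd_psi (L R : Finset ℕ) (h : L.card = R.card) :
    (psi (L, R)).image Prod.snd = R := by
  rw [psi, toFinset_map_image, List.map_snd_zip (by simp [h]), Finset.sort_toFinset]

lemma mem_psi (L R : Finset ℕ) {p : ℕ × ℕ} (hp : p ∈ psi (L, R)) : p.1 ∈ L ∧ p.2 ∈ R := by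
  rw [psi, List.mem_toFinset] at hp
  obtain ⟨h1, h2⟩ := List.of_mem_zip (show (p.1, p.2) ∈ _ from hp)
  exact ⟨(Finset.mem_sort _).mp h1, (Finset.mem_sort _).mp h2⟩

lemma adj_psi (L R : Finset ℕ) (h : L.card = R.card) (hdisj : Disjoint L R)
    {p q : ℕ × ℕ} (hp : p ∈ psi (L, R)) (hq : q ∈ psi (L, R)) (hne : p ≠ q) :
    AdjP p q := by
  have hpm := mem_psi L R hp
  have hqm := mem_psi L R hq
  have hd1 : p.1 ≠ q.2 := fun e => Finset.disjoint_left.mp hdisj hpm.1 (e ▸ hqm.2)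
  have hd2 : p.2 ≠ q.1 := fun e => Finset.disjoint_left.mp hdisj hqm.1 (e ▸ hpm.2)
  have hp' : p ∈ (L.sort (· ≤ ·)).zip (R.sort (· ≤ ·)) := by simpa [psi] using hp
  have hq' : q ∈ (L.sort (· ≤ ·)).zip (R.sort (· ≤ ·)) := by simpa [psi] using hq
  have hlen : (L.sort (· ≤ ·)).length = (R.sort (· ≤ ·)).length := by
    simp [Finset.length_sort, h]
  have hzl : ((L.sort (· ≤ ·)).zip (R.sort (· ≤ ·))).length = (L.sort (· ≤ ·)).length := by
    simp [List.length_zip, hlen]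
  obtain ⟨i, hi⟩ := List.mem_iff_get.mp hp'
  obtain ⟨j, hj⟩ := List.mem_iff_get.mp hq'
  simp only [List.get_eq_getElem, List.getElem_zip] at hi hj
  have hi1 : (i : ℕ) < (L.sort (· ≤ ·)).length := lt_of_lt_of_eq i.2 hzl
  have hi2 : (i : ℕ) < (R.sort (· ≤ ·)).length := lt_of_lt_of_eq i.2 (hzl.trans hlen)
  have hj1 : (j : ℕ) < (L.sort (· ≤ ·)).length := lt_of_lt_of_eq j.2 hzl
  have hj2 : (j : ℕ) < (R.sort (· ≤ ·)).length := lt_of_lt_of_eq j.2 (hzl.trans hlen)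
  have hij : i ≠ j := fun e => hne (by rw [← hi, ← hj, e])
  have hijv : (i : ℕ) ≠ (j : ℕ) := fun e => hij (Fin.ext e)
  have sl : StrictMono (L.sort (· ≤ ·)).get := (Finset.sortedLT_sort L).strictMono_get
  have sr : StrictMono (R.sort (· ≤ ·)).get := (Finset.sortedLT_sort R).strictMono_get
  have hp1 : p.1 = (L.sort (· ≤ ·)).get ⟨i, hi1⟩ := by rw [← hi]; rfl
  have hp2 : p.2 = (R.sort (· ≤ ·)).get ⟨i, hi2⟩ := by rw [← hi]; rfl
  have hq1 : q.1 = (L.sort (· ≤ ·)).get ⟨j, hj1⟩ := by rw [← hj]; rfl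
  have hq2 : q.2 = (R.sort (· ≤ ·)).get ⟨j, hj2⟩ := by rw [← hj]; rfl
  refine ⟨?_, hd1, hd2, ?_, ?_⟩
  · rw [hp1, hq1]
    intro e
    exact hijv (by simpa using congrArg Fin.val (sl.injective e))
  · rw [hp2, hq2]
    intro e
    exact hijv (by simpa using congrArg Fin.val (sr.injective e))
  · rw [hp1, hq1, hp2, hq2, sl.lt_iff_lt, sr.lt_iff_lt]
    simp [Fin.mk_lt_mk]

lemma sort_min'_cons (s : Finset ℕ) (h : s.Nonempty) :
    s.sort (· ≤ ·) = s.min' h :: (s.erase (s.min' h)).sort (· ≤ ·) := by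
  refine (fun h1 h2 h3 => List.Perm.eq_of_pairwise' (r := (· ≤ ·)) h2 h3 h1) ?_ ?_ ?_
  · apply List.perm_of_nodup_nodup_toFinset_eq (Finset.sort_nodup _ _)
    · rw [List.nodup_cons]
      exact ⟨by simp [Finset.mem_sort], Finset.sort_nodup _ _⟩
    · simp [Finset.sort_toFinset, Finset.insert_erase (s.min'_mem h)]
  · exact Finset.pairwise_sort _ _
  · rw [List.pairwise_cons]
    exact ⟨fun b hb => s.min'_le b (Finset.mem_of_mem_erase ((Finset.mem_sort _).mp hb)),
      Finset.pairwise_sort _ _⟩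

lemma psi_insert (L R : Finset ℕ) (hL : L.Nonempty) (hR : R.Nonempty) :
    psi (L, R) = insert (L.min' hL, R.min' hR)
      (psi (L.erase (L.min' hL), R.erase (R.min' hR))) := by
  rw [psi, psi, sort_min'_cons L hL, sort_min'_cons R hR]
  simp [List.zip_cons_cons]

lemma eq_psi : ∀ (m : ℕ) (S : Finset (ℕ × ℕ)), S.card = m →
    (∀ p ∈ S, ∀ q ∈ S, p.1 = q.1 → p = q) →
    (∀ p ∈ S, ∀ q ∈ S, p.1 < q.1 → p.2 < q.2) →
    psi (S.image Prod.fst, S.image Prod.snd) = S := by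
  intro m
  induction m with
  | zero =>
    intro S hS _ _
    rw [Finset.card_eq_zero] at hS
    subst hS
    simp [psi]
  | succ m ih =>
    intro S hS hfst hmono
    have hsnd : ∀ p ∈ S, ∀ q ∈ S, p.2 = q.2 → p = q := by
      intro p hp q hq e
      by_contra hne
      have h1 : p.1 ≠ q.1 := fun e1 => hne (hfst p hp q hq e1)
      rcases lt_or_gt_of_ne h1 with h | h
      · exact absurd e (ne_of_lt (hmono p hp q hq h))
      · exact absurd e.symm (ne_of_lt (hmono q hq p hp h))
    have hSne : S.Nonempty := Finset.card_pos.mp (by omega)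
    have hL : (S.image Prod.fst).Nonempty := hSne.image _
    have hR : (S.image Prod.snd).Nonempty := hSne.image _
    obtain ⟨p0, hp0S, hp01⟩ := Finset.mem_image.mp ((S.image Prod.fst).min'_mem hL)
    -- p0 has minimal first coordinate; its second coordinate is also minimal
    have hmin1 : ∀ q ∈ S, q ≠ p0 → p0.1 < q.1 := by
      intro q hq hqne
      have h1 : p0.1 ≠ q.1 := fun e => hqne (hfst q hq p0 hp0S e.symm)
      have hle : p0.1 ≤ q.1 := hp01 ▸ (S.image Prod.fst).min'_le q.1
        (Finset.mem_image_of_mem _ hq)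
      omega
    have hp02 : p0.2 = (S.image Prod.snd).min' hR := by
      apply le_antisymm
      · apply Finset.le_min'
        intro y hy
        obtain ⟨q, hq, rfl⟩ := Finset.mem_image.mp hy
        rcases eq_or_ne q p0 with rfl | hqne
        · exact le_refl _
        · exact le_of_lt (hmono p0 hp0S q hq (hmin1 q hq hqne))
      · exact (S.image Prod.snd).min'_le p0.2 (Finset.mem_image_of_mem _ hp0S)
    have hLE : (S.erase p0).image Prod.fst = (S.image Prod.fst).erase p0.1 := by
      ext x
      simp only [Finset.mem_image, Finset.mem_erase]
      constructor
      · rintro ⟨q, ⟨hqne, hqS⟩, rfl⟩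
        exact ⟨fun e => hqne (hfst q hqS p0 hp0S e), q, hqS, rfl⟩
      · rintro ⟨hxne, q, hqS, rfl⟩
        exact ⟨q, ⟨fun e => hxne (by rw [e]), hqS⟩, rfl⟩
    have hRE : (S.erase p0).image Prod.snd = (S.image Prod.snd).erase p0.2 := by
      ext x
      simp only [Finset.mem_image, Finset.mem_erase]
      constructor
      · rintro ⟨q, ⟨hqne, hqS⟩, rfl⟩
        exact ⟨fun e => hqne (hsnd q hqS p0 hp0S e), q, hqS, rfl⟩
      · rintro ⟨hxne, q, hqS, rfl⟩
        exact ⟨q, ⟨fun e => hxne (by rw [e]), hqS⟩, rfl⟩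
    have hcard : (S.erase p0).card = m := by
      rw [Finset.card_erase_of_mem hp0S, hS]
      omega
    have hihyp := ih (S.erase p0) hcard
      (fun p hp q hq e => hfst p (Finset.mem_of_mem_erase hp) q (Finset.mem_of_mem_erase hq) e)
      (fun p hp q hq e => hmono p (Finset.mem_of_mem_erase hp) q (Finset.mem_of_mem_erase hq) e)
    rw [psi_insert _ _ hL hR, ← hp01, ← hp02, ← hLE, ← hRE, hihyp]
    exact Finset.insert_erase hp0S

/-- `ψ` is a bijection from pairs of disjoint `k`-element subsets of `[n]` onto the
`k`-element subsets of `V_{P_n}` whose elements are pairwise adjacent. -/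
theorem psi_bijection (n k : ℕ) :
    Set.BijOn psi
      {LR : Finset ℕ × Finset ℕ |
        LR.1 ⊆ Finset.Icc 1 n ∧ LR.2 ⊆ Finset.Icc 1 n ∧
        LR.1.card = k ∧ LR.2.card = k ∧ Disjoint LR.1 LR.2}
      {S : Finset (ℕ × ℕ) | S.card = k ∧ (∀ p ∈ S, p ∈ VPn n) ∧
        (∀ p ∈ S, ∀ q ∈ S, p ≠ q → AdjP p q)} := by
  constructor
  · -- MapsTo
    rintro ⟨L, R⟩ ⟨hLn, hRn, hLk, hRk, hdisj⟩
    have hcard : L.card = R.card := hLk.trans hRk.symm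
    refine ⟨by rw [psi_card L R hcard, hLk], ?_, ?_⟩
    · intro p hp
      obtain ⟨h1, h2⟩ := mem_psi L R hp
      rw [VPn, Finset.mem_filter, Finset.mem_product]
      exact ⟨⟨hLn h1, hRn h2⟩, fun e => Finset.disjoint_left.mp hdisj h1 (e ▸ h2)⟩
    · intro p hp q hq hne
      exact adj_psi L R hcard hdisj hp hq hne
  constructor
  · -- InjOn
    rintro ⟨L1, R1⟩ ⟨_, _, hL1, hR1, _⟩ ⟨L2, R2⟩ ⟨_, _, hL2, hR2, _⟩ heq
    have h1 : L1.card = R1.card := hL1.trans hR1.symm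
    have h2 : L2.card = R2.card := hL2.trans hR2.symm
    have e1 : L1 = L2 := by
      rw [← image_fst_psi L1 R1 h1, ← image_fst_psi L2 R2 h2, heq]
    have e2 : R1 = R2 := by
      rw [← image_snd_psi L1 R1 h1, ← image_snd_psi L2 R2 h2, heq]
    simp [e1, e2]
  · -- SurjOn
    rintro S ⟨hSk, hVPn, hAdj⟩
    have hfst : ∀ p ∈ S, ∀ q ∈ S, p.1 = q.1 → p = q := by
      intro p hp q hq e
      by_contra hne
      exact (hAdj p hp q hq hne).1 e
    have hsnd : ∀ p ∈ S, ∀ q ∈ S, p.2 = q.2 → p = q := by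
      intro p hp q hq e
      by_contra hne
      exact (hAdj p hp q hq hne).2.2.2.1 e
    have hmono : ∀ p ∈ S, ∀ q ∈ S, p.1 < q.1 → p.2 < q.2 := by
      intro p hp q hq hlt
      have hne : p ≠ q := fun e => lt_irrefl _ (e ▸ hlt)
      exact (hAdj p hp q hq hne).2.2.2.2.mp hlt
    refine ⟨(S.image Prod.fst, S.image Prod.snd), ⟨?_, ?_, ?_, ?_, ?_⟩, ?_⟩
    · intro x hx
      obtain ⟨p, hp, rfl⟩ := Finset.mem_image.mp hx
      have := hVPn p hp
      rw [VPn, Finset.mem_filter, Finset.mem_product] at this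
      exact this.1.1
    · intro x hx
      obtain ⟨p, hp, rfl⟩ := Finset.mem_image.mp hx
      have := hVPn p hp
      rw [VPn, Finset.mem_filter, Finset.mem_product] at this
      exact this.1.2
    · rw [Finset.card_image_of_injOn (fun p hp q hq e => hfst p hp q hq e), hSk]
    · rw [Finset.card_image_of_injOn (fun p hp q hq e => hsnd p hp q hq e), hSk]
    · rw [Finset.disjoint_left]
      intro x hxL hxR
      obtain ⟨p, hp, rfl⟩ := Finset.mem_image.mp hxL
      obtain ⟨q, hq, he⟩ := Finset.mem_image.mp hxR
      rcases eq_or_ne p q with rfl | hne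
      · have := hVPn p hp
        rw [VPn, Finset.mem_filter] at this
        exact this.2 he.symm
      · exact (hAdj q hq p hp hne.symm).2.2.1 he
    · exact eq_psi S.card S rfl hfst hmono
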